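/- arXiv:1908.11728 — 3 statements merged into one kernel-verified Lean document; each statement's English description precedes it below -/
import Mathlib

section
/- Let a, b, c > 0 and let Ĝ(a,b,c) be the 2×2 real symmetric matrix with entries Ĝ₁₁ = b², Ĝ₂₂ = a², Ĝ₁₂ = Ĝ₂₁ = −(a² + b² − c²)/2. Then Ĝ(a,b,c) is positive definite if and only if a, b, c satisfy the three strict triangle inequalities a + b − c > 0, a − b + c > 0, and −a + b + c > 0. -/
open Matrix

/-- The discrete first fundamental form of a triangle with edge lengths `a, b, c`. -/
noncomputable def Ghat (a b c : ℝ) : Matrix (Fin 2) (Fin 2) ℝ :=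
  !![b ^ 2, -(a ^ 2 + b ^ 2 - c ^ 2) / 2;
     -(a ^ 2 + b ^ 2 - c ^ 2) / 2, a ^ 2]

theorem Ghat_posDef_iff_triangle_inequalities
    (a b c : ℝ) (ha : 0 < a) (hb : 0 < b) (hc : 0 < c) :
    (Ghat a b c).PosDef ↔
      (0 < a + b - c ∧ 0 < a - b + c ∧ 0 < -a + b + c) := by
  constructor
  · intro hpd
    have hdet := hpd.det_pos
    rw [Ghat, Matrix.det_fin_two_of] at hdet
    have hprod : 0 < (a + b - c) * ((a - b + c) * (-a + b + c)) := by nlinarith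
    have h1 : 0 < a + b - c := by
      by_contra hC
      push_neg at hC
      have hs2 : 0 < a - b + c := by linarith
      have hs3 : 0 < -a + b + c := by linarith
      nlinarith [mul_pos hs2 hs3]
    have h2 : 0 < a - b + c := by
      by_contra hC
      push_neg at hC
      have hs3 : 0 < -a + b + c := by linarith
      nlinarith [mul_pos h1 hs3]
    have h3 : 0 < -a + b + c := by
      by_contra hC
      push_neg at hC
      nlinarith [mul_pos h1 h2]
    exact ⟨h1, h2, h3⟩
  · rintro ⟨h1, h2, h3⟩
    refine ⟨?_, ?_⟩
    · rw [Matrix.IsHermitian, Ghat]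
      ext i j
      fin_cases i <;> fin_cases j <;> simp [Matrix.conjTranspose, Matrix.vecHead, Matrix.vecTail]
    · intro x hx
      have hx0 : x 0 ≠ 0 ∨ x 1 ≠ 0 := by
        by_contra h
        push_neg at h
        apply hx
        ext i
        fin_cases i <;> simp [h.1, h.2]
      simp [Ghat, dotProduct, Matrix.mulVec, Finsupp.sum_fintype, Fin.sum_univ_two]
      have hdet : 0 < a ^ 2 * b ^ 2 - ((c ^ 2 - (a ^ 2 + b ^ 2)) / 2) ^ 2 := by
        nlinarith [mul_pos (mul_pos h1 h2) (mul_pos h3 (show (0:ℝ) < a + b + c by linarith))]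
      rcases hx0 with h | h
      · nlinarith [sq_nonneg (a ^ 2 * x 1 + (c ^ 2 - (a ^ 2 + b ^ 2)) / 2 * x 0),
          mul_pos hdet (sq_pos_of_ne_zero h), pow_pos ha 2, sq_nonneg (x 1)]
      · nlinarith [sq_nonneg (b ^ 2 * x 0 + (c ^ 2 - (a ^ 2 + b ^ 2)) / 2 * x 1),
          mul_pos hdet (sq_pos_of_ne_zero h), pow_pos hb 2, sq_nonneg (x 0)]
end

section
/- Let a, b, c > 0 satisfy the strict triangle inequalities and let ã, b̃, c̃ be real numbers. With Ĝ(a,b,c) the 2×2 matrix with entries Ĝ₁₁ = b², Ĝ₂₂ = a², Ĝ₁₂ = Ĝ₂₁ = −(a²+b²−c²)/2, and similarly Ĝ(ã,b̃,c̃), the trace of the discrete distortion tensor satisfies trace(Ĝ(a,b,c)⁻¹ · Ĝ(ã,b̃,c̃)) = ( ã²(−a²+b²+c²) + b̃²(a²−b²+c²) + c̃²(a²+b²−c²) ) / (8·A(a,b,c)²), where A(a,b,c)² = (1/16)(a+b+c)(−a+b+c)(a−b+c)(a+b−c) is the squared Heron area. -/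
open Matrix

/-- The squared Heron area of a triangle with edge lengths `a, b, c`. -/
noncomputable def heronAreaSq (a b c : ℝ) : ℝ :=
  (1 / 16) * ((a + b + c) * (-a + b + c) * (a - b + c) * (a + b - c))

theorem trace_distortion_tensor (a b c ta tb tc : ℝ)
    (ha : 0 < a) (hb : 0 < b) (hc : 0 < c)
    (h1 : 0 < a + b - c) (h2 : 0 < a - b + c) (h3 : 0 < -a + b + c) :
    ((Ghat a b c)⁻¹ * Ghat ta tb tc).trace =
      (ta ^ 2 * (-a ^ 2 + b ^ 2 + c ^ 2) + tb ^ 2 * (a ^ 2 - b ^ 2 + c ^ 2)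
        + tc ^ 2 * (a ^ 2 + b ^ 2 - c ^ 2)) / (8 * heronAreaSq a b c) := by
  have hH : 0 < heronAreaSq a b c := by
    unfold heronAreaSq
    positivity
  have hdet : (Ghat a b c).det = 4 * heronAreaSq a b c := by
    simp [Ghat, Matrix.det_fin_two, heronAreaSq]; ring
  have hdet0 : (Ghat a b c).det ≠ 0 := by rw [hdet]; positivity
  have hd : (!![b ^ 2, -(a ^ 2 + b ^ 2 - c ^ 2) / 2; -(a ^ 2 + b ^ 2 - c ^ 2) / 2, a ^ 2] : Matrix (Fin 2) (Fin 2) ℝ).det = 4 * heronAreaSq a b c := by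
    simpa [Ghat] using hdet
  rw [Matrix.inv_def]
  simp only [Ghat, Matrix.adjugate_fin_two_of, Matrix.smul_mul, Matrix.trace_smul,
    Matrix.trace_fin_two, Matrix.mul_apply, Fin.sum_univ_two, Matrix.cons_val',
    Matrix.cons_val_zero, Matrix.cons_val_one, Matrix.head_cons,
    Matrix.empty_val', Matrix.cons_val_fin_one, Matrix.of_apply, smul_eq_mul,
    Ring.inverse_eq_inv', hd]
  have : heronAreaSq a b c ≠ 0 := ne_of_gt hH
  field_simp
  ring
end

section
/- Let Q : ℝⁿ → ℝᵐ be strictly differentiable at a point z with Q(z) = 0, and suppose the derivative DQ(z) : ℝⁿ → ℝᵐ is surjective. Then the tangent cone at z of the level set M = { x ∈ ℝⁿ | Q(x) = 0 } equals the kernel of DQ(z): tangentConeAt ℝ M z = ker DQ(z). -/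
open Filter Topology

theorem tangent_cone_of_level_set
    (n m : ℕ) (Q : (Fin n → ℝ) → (Fin m → ℝ))
    (z : Fin n → ℝ) (Q' : (Fin n → ℝ) →L[ℝ] (Fin m → ℝ))
    (hQ : HasStrictFDerivAt Q Q' z) (hz : Q z = 0)
    (hsurj : Function.Surjective Q') :
    tangentConeAt ℝ {x : Fin n → ℝ | Q x = 0} z = LinearMap.ker (Q' : (Fin n → ℝ) →ₗ[ℝ] (Fin m → ℝ)) := by
  have hr : LinearMap.range (Q' : (Fin n → ℝ) →ₗ[ℝ] (Fin m → ℝ)) = ⊤ := LinearMap.range_eq_top.2 hsurj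
  set s : Set (Fin n → ℝ) := {x : Fin n → ℝ | Q x = 0} with hs
  apply le_antisymm
  · -- tangent cone ⊆ ker
    intro w hw
    have h1 : HasFDerivWithinAt Q Q' s z := hQ.hasFDerivAt.hasFDerivWithinAt
    have h2 : HasFDerivWithinAt Q (0 : (Fin n → ℝ) →L[ℝ] (Fin m → ℝ)) s z := by
      have : HasFDerivWithinAt (fun _ : Fin n → ℝ => (0 : Fin m → ℝ))
          (0 : (Fin n → ℝ) →L[ℝ] (Fin m → ℝ)) s z := hasFDerivWithinAt_const _ _ _
      exact this.congr (fun x hx => hx) hz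
    have := h1.unique_on h2 hw
    simpa [LinearMap.mem_ker] using this
  · -- ker ⊆ tangent cone
    intro w hw
    have hw' : Q' w = 0 := hw
    set wk : LinearMap.ker (Q' : (Fin n → ℝ) →ₗ[ℝ] (Fin m → ℝ)) := ⟨w, hw⟩ with hwk
    set g : (Fin m → ℝ) → LinearMap.ker (Q' : (Fin n → ℝ) →ₗ[ℝ] (Fin m → ℝ)) → (Fin n → ℝ) :=
      hQ.implicitFunction Q Q' hr with hg
    have hgz : g (Q z) 0 = z := hQ.implicitFunction_apply_image hr
    have hderiv : HasStrictFDerivAt (g (Q z))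
        (LinearMap.ker (Q' : (Fin n → ℝ) →ₗ[ℝ] (Fin m → ℝ))).subtypeL 0 := hQ.to_implicitFunction hr
    -- sequences
    set c : ℕ → ℝ := fun k => (k : ℝ) + 1 with hc
    have hcnorm : Tendsto (fun k => ‖c k‖) atTop atTop := by
      have : Tendsto c atTop atTop :=
        tendsto_atTop_add_const_right _ 1 tendsto_natCast_atTop_atTop
      exact tendsto_abs_atTop_atTop.comp this
    set d : ℕ → (Fin n → ℝ) := fun k => g (Q z) ((c k)⁻¹ • wk) - z with hd
    have hlim : Tendsto (fun k => c k • d k) atTop (𝓝 w) := by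
      have := hderiv.hasFDerivAt.lim wk hcnorm
      simp only [zero_add, hgz] at this
      simpa [d, Submodule.coe_subtypeL'] using this
    refine mem_tangentConeAt_of_seq atTop c d ?_ ?_ hlim
    · have hinv : Tendsto (fun k => (c k)⁻¹) atTop (𝓝 0) :=
        tendsto_inv_atTop_zero.comp
          (tendsto_atTop_add_const_right _ 1 tendsto_natCast_atTop_atTop)
      have h2 : Tendsto (fun k => (c k)⁻¹ • wk) atTop (𝓝 0) := by
        simpa using hinv.smul_const wk
      have := (hQ.tendsto_implicitFunction hr (tendsto_const_nhds (x := Q z)) h2).sub_const z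
      simpa [d, hg] using this
    · -- eventually z + d k ∈ s
      have hmap := hQ.map_implicitFunction_eq hr
      have htend : Tendsto (fun k => ((Q z, (c k)⁻¹ • wk) : (Fin m → ℝ) × LinearMap.ker (Q' : (Fin n → ℝ) →ₗ[ℝ] (Fin m → ℝ))))
          atTop (𝓝 (Q z, 0)) := by
        refine Tendsto.prodMk_nhds tendsto_const_nhds ?_
        have hinv : Tendsto (fun k => (c k)⁻¹) atTop (𝓝 0) :=
          tendsto_inv_atTop_zero.comp
            (tendsto_atTop_add_const_right _ 1 tendsto_natCast_atTop_atTop)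
        simpa using hinv.smul_const wk
      filter_upwards [htend.eventually hmap] with k hk
      have : z + d k = g (Q z) ((c k)⁻¹ • wk) := by simp [d]
      rw [hs, Set.mem_setOf_eq, this]
      simpa [hz] using hk
end
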